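/- Let α > 0, μ > 0, ν > 0 and γ, σ, δ be real. Then for every t > 0, ∫₀ᵗ (t−s)^{μ−1} E_{α,μ}^{γ}(δ(t−s)^α) · s^{ν−1} E_{α,ν}^{σ}(δ s^α) ds = t^{μ+ν−1} E_{α,μ+ν}^{γ+σ}(δ t^α). -/

import Mathlib

/-- The three-parameter Mittag-Leffler (Prabhakar) function
`E_{α,β}^{γ}(z) = ∑_{k=0}^∞ (γ)_k z^k / (Γ(αk+β) k!)`. -/
noncomputable def prabE (α β γ z : ℝ) : ℝ :=
  ∑' k : ℕ, (ascPochhammer ℝ k).eval γ * z ^ k /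
    (Real.Gamma (α * k + β) * (k.factorial : ℝ))


open scoped BigOperators
open Finset MeasureTheory intervalIntegral

lemma aux_rpow_le_gamma {K x : ℝ} (hK : 1 ≤ K) (hx : 2 ≤ x) :
    K ^ x ≤ Real.exp K * K ^ (2:ℕ) * Real.Gamma x := by
  have hK0 : (0:ℝ) < K := lt_of_lt_of_le one_pos hK
  have hx0 : (0:ℝ) ≤ x := by linarith
  have h2n : 2 ≤ ⌊x⌋₊ := Nat.le_floor (by exact_mod_cast hx)
  obtain ⟨m, hm⟩ : ∃ m, ⌊x⌋₊ = m + 2 := ⟨⌊x⌋₊ - 2, by omega⟩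
  have hnx : ((m + 2 : ℕ) : ℝ) ≤ x := by rw [← hm]; exact Nat.floor_le hx0
  have hxn : x < (m + 2 : ℕ) + 1 := by rw [← hm]; exact Nat.lt_floor_add_one x
  have hΓmono : Real.Gamma ((m+2 : ℕ) : ℝ) ≤ Real.Gamma x := by
    refine Real.Gamma_strictMonoOn_Ici.monotoneOn ?_ ?_ hnx
    · simp only [Set.mem_Ici]; exact_mod_cast (hm ▸ h2n)
    · exact hx
  have hΓn : Real.Gamma ((m+2 : ℕ) : ℝ) = (m+1).factorial := by
    rw [show ((m+2:ℕ):ℝ) = ((m+1:ℕ):ℝ) + 1 by push_cast; ring, Real.Gamma_nat_eq_factorial]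
  have hfact : K ^ (m+1) ≤ Real.exp K * (m+1).factorial := by
    have := Real.pow_div_factorial_le_exp K hK0.le (m+1)
    rw [div_le_iff₀ (by positivity)] at this
    linarith [this]
  have h1 : K ^ x ≤ K ^ (((m+2:ℕ):ℝ) + 1) :=
    Real.rpow_le_rpow_of_exponent_le hK hxn.le
  have h2 : K ^ (((m+2:ℕ):ℝ) + 1) = K ^ (m+1) * K ^ (2:ℕ) := by
    rw [show (((m+2:ℕ):ℝ) + 1) = ((m+3:ℕ):ℝ) by push_cast; ring, Real.rpow_natCast]
    ring
  calc K ^ x ≤ K ^ (m+1) * K ^ (2:ℕ) := by rw [← h2]; exact h1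
    _ ≤ (Real.exp K * (m+1).factorial) * K ^ (2:ℕ) :=
        mul_le_mul_of_nonneg_right hfact (by positivity)
    _ = Real.exp K * K ^ (2:ℕ) * Real.Gamma ((m+2:ℕ):ℝ) := by rw [hΓn]; ring
    _ ≤ Real.exp K * K ^ (2:ℕ) * Real.Gamma x :=
        mul_le_mul_of_nonneg_left hΓmono (by positivity)

lemma aux_inv_gamma_le {K x : ℝ} (hK : 1 ≤ K) (hx : 2 ≤ x) :
    1 / Real.Gamma x ≤ Real.exp K * K ^ (2:ℕ) / K ^ x := by
  have hK0 : (0:ℝ) < K := lt_of_lt_of_le one_pos hK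
  have hΓ : 0 < Real.Gamma x := Real.Gamma_pos_of_pos (by linarith)
  rw [div_le_div_iff₀ hΓ (Real.rpow_pos_of_pos hK0 x)]
  have := aux_rpow_le_gamma hK hx
  nlinarith

lemma abs_ascPochhammer_le (γ : ℝ) : ∀ k : ℕ,
    |(ascPochhammer ℝ k).eval γ| ≤ (|γ|+1)^k * k.factorial
  | 0 => by simp
  | (k+1) => by
    rw [ascPochhammer_succ_eval, abs_mul]
    have h1 := abs_ascPochhammer_le γ k
    have h2 : |γ + (k:ℝ)| ≤ (|γ|+1) * ((k:ℝ)+1) := by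
      refine (abs_add_le _ _).trans ?_
      rw [abs_of_nonneg (Nat.cast_nonneg k : (0:ℝ) ≤ k)]
      nlinarith [abs_nonneg γ, Nat.cast_nonneg (α := ℝ) k]
    calc |(ascPochhammer ℝ k).eval γ| * |γ + (k:ℝ)|
        ≤ ((|γ|+1)^k * k.factorial) * ((|γ|+1) * ((k:ℝ)+1)) := by
          refine mul_le_mul h1 h2 (abs_nonneg _) (by positivity)
      _ = (|γ|+1)^(k+1) * ((k+1).factorial) := by
          rw [Nat.factorial_succ]; push_cast; ring
lemma summable_pow_div_gamma {α β : ℝ} (hα : 0 < α) (hβ : 0 < β) {r : ℝ} (hr : 0 ≤ r) :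
    Summable (fun k : ℕ => r ^ k / Real.Gamma (α * k + β)) := by
  set K : ℝ := max 1 ((2 * (r+1)) ^ (α⁻¹)) with hKdef
  have hK1 : 1 ≤ K := le_max_left _ _
  have hK0 : (0:ℝ) < K := lt_of_lt_of_le one_pos hK1
  have hKα : 2 * (r + 1) ≤ K ^ α := by
    calc 2*(r+1) = ((2*(r+1)) ^ (α⁻¹)) ^ α := (Real.rpow_inv_rpow (by positivity) hα.ne').symm
    _ ≤ K ^ α := Real.rpow_le_rpow (by positivity) (le_max_right _ _) hα.le
  have hKαpos : 0 < K ^ α := Real.rpow_pos_of_pos hK0 α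
  have hsum : Summable (fun k : ℕ => (Real.exp K * K^(2:ℕ) / K ^ β) * (1/2 : ℝ)^k) :=
    (summable_geometric_of_lt_one (by norm_num) (by norm_num)).mul_left _
  refine Summable.of_norm_bounded_eventually hsum ?_
  rw [Nat.cofinite_eq_atTop]
  filter_upwards [Filter.eventually_ge_atTop ⌈2/α⌉₊] with k hk
  have hk2 : 2 ≤ α * k + β := by
    have h1 : (⌈2/α⌉₊ : ℝ) ≤ k := Nat.cast_le.mpr hk
    have h2 : 2/α ≤ (k:ℝ) := le_trans (Nat.le_ceil _) h1
    have h3 := (div_le_iff₀ hα).mp h2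
    nlinarith
  have hΓpos : 0 < Real.Gamma (α*k+β) := Real.Gamma_pos_of_pos (by linarith)
  rw [Real.norm_eq_abs, abs_of_nonneg (by positivity)]
  have h1 : 1 / Real.Gamma (α*k+β) ≤ Real.exp K * K^(2:ℕ) / K ^ (α*k+β) :=
    aux_inv_gamma_le hK1 hk2
  have hKsplit : K ^ (α*(k:ℝ)+β) = (K^α)^k * K ^ β := by
    rw [Real.rpow_add hK0, ← Real.rpow_natCast (K^α) k, ← Real.rpow_mul hK0.le]
  have hhalf : r / K^α ≤ 1/2 := by
    rw [div_le_div_iff₀ hKαpos (by norm_num)]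
    nlinarith
  calc r ^ k / Real.Gamma (α*k+β) = r^k * (1 / Real.Gamma (α*k+β)) := by ring
    _ ≤ r^k * (Real.exp K * K^(2:ℕ) / K ^ (α*k+β)) := by
        exact mul_le_mul_of_nonneg_left h1 (by positivity)
    _ = (Real.exp K * K^(2:ℕ) / K ^ β) * (r / K^α)^k := by
        rw [hKsplit, div_pow]
        field_simp
    _ ≤ (Real.exp K * K^(2:ℕ) / K ^ β) * (1/2:ℝ)^k := by
        refine mul_le_mul_of_nonneg_left ?_ (by positivity)
        exact pow_le_pow_left₀ (by positivity) hhalf k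

lemma summable_prab_norm {α β : ℝ} (hα : 0 < α) (hβ : 0 < β) (γ z : ℝ) :
    Summable (fun k : ℕ => ‖(ascPochhammer ℝ k).eval γ * z ^ k /
      (Real.Gamma (α * k + β) * (k.factorial : ℝ))‖) := by
  refine Summable.of_nonneg_of_le (fun k => norm_nonneg _) (fun k => ?_)
    (summable_pow_div_gamma hα hβ (r := (|γ|+1) * |z|) (by positivity))
  have hΓ : 0 < Real.Gamma (α*k+β) := Real.Gamma_pos_of_pos (by positivity)
  have hf : (0:ℝ) < k.factorial := by exact_mod_cast k.factorial_pos
  rw [Real.norm_eq_abs, abs_div, abs_mul, abs_pow,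
    abs_of_pos (by positivity : (0:ℝ) < Real.Gamma (α*k+β) * k.factorial), mul_pow,
    div_le_div_iff₀ (by positivity) hΓ]
  calc |(ascPochhammer ℝ k).eval γ| * |z|^k * Real.Gamma (α*k+β)
      ≤ ((|γ|+1)^k * k.factorial) * |z|^k * Real.Gamma (α*k+β) := by
        refine mul_le_mul_of_nonneg_right (mul_le_mul_of_nonneg_right
          (abs_ascPochhammer_le γ k) (by positivity)) hΓ.le
    _ = (|γ|+1)^k * |z|^k * (Real.Gamma (α*k+β) * k.factorial) := by ring
lemma ascPochhammer_add_eval (x y : ℝ) : ∀ n : ℕ,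
    (ascPochhammer ℝ n).eval (x + y) =
      ∑ ij ∈ antidiagonal n, (n.choose ij.1 : ℝ) *
        ((ascPochhammer ℝ ij.1).eval x * (ascPochhammer ℝ ij.2).eval y)
  | 0 => by simp
  | (n+1) => by
    rw [Finset.sum_antidiagonal_choose_succ_mul
      (fun i j => (ascPochhammer ℝ i).eval x * (ascPochhammer ℝ j).eval y) n,
      ascPochhammer_succ_eval, ascPochhammer_add_eval x y n, Finset.sum_mul,
      ← Finset.sum_add_distrib]
    refine Finset.sum_congr rfl fun ij hij => ?_
    have hsum : ij.1 + ij.2 = n := Finset.HasAntidiagonal.mem_antidiagonal.mp hij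
    have hchoose : (n.choose ij.2 : ℝ) = (n.choose ij.1 : ℝ) := by
      rw [Nat.choose_symm_of_eq_add hsum.symm]
    have hc : (ij.1 : ℝ) + (ij.2 : ℝ) = n := by exact_mod_cast hsum
    rw [ascPochhammer_succ_eval, ascPochhammer_succ_eval, hchoose]
    linear_combination (-((n.choose ij.1 : ℝ)) *
      ((ascPochhammer ℝ ij.1).eval x * (ascPochhammer ℝ ij.2).eval y)) * hc
lemma intervalIntegrable_beta {p q t : ℝ} (hp : 0 < p) (hq : 0 < q) (ht : 0 < t) :
    IntervalIntegrable (fun s => s ^ (p-1) * (t - s) ^ (q-1)) volume 0 t := by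
  have h1 : IntervalIntegrable (fun s : ℝ => s ^ (p-1) * (t - s) ^ (q-1)) volume 0 (t/2) := by
    refine IntervalIntegrable.mul_continuousOn
      (intervalIntegral.intervalIntegrable_rpow' (by linarith)) ?_
    refine ContinuousOn.rpow_const (by fun_prop) fun x hx => Or.inl ?_
    rw [Set.uIcc_of_le (by linarith)] at hx
    have := hx.2
    intro h; nlinarith [hx.1, hx.2]
  have h2 : IntervalIntegrable (fun s : ℝ => s ^ (p-1) * (t - s) ^ (q-1)) volume (t/2) t := by
    have hbase : IntervalIntegrable (fun s : ℝ => (t - s) ^ (q-1)) volume (t/2) t := by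
      have h := (intervalIntegral.intervalIntegrable_rpow' (r := q-1) (a := 0)
        (b := t/2) (by linarith)).comp_sub_left t
      rw [sub_zero, sub_half] at h
      exact h.symm
    refine (IntervalIntegrable.continuousOn_mul hbase ?_)
    refine ContinuousOn.rpow_const (by fun_prop) fun x hx => Or.inl ?_
    rw [Set.uIcc_of_le (by linarith)] at hx
    intro h; nlinarith [hx.1, hx.2]
  exact h1.trans h2

lemma integral_beta_real {p q t : ℝ} (hp : 0 < p) (hq : 0 < q) (ht : 0 < t) :
    ∫ s in (0:ℝ)..t, s ^ (p-1) * (t - s) ^ (q-1)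
      = t ^ (p+q-1) * (Real.Gamma p * Real.Gamma q / Real.Gamma (p+q)) := by
  have hbeta := Complex.betaIntegral_scaled (p:ℂ) (q:ℂ) ht
  have hgamma := Complex.Gamma_mul_Gamma_eq_betaIntegral
    (by simpa using hp : 0 < (p:ℂ).re) (by simpa using hq : 0 < (q:ℂ).re)
  have hΓpq : (Complex.Gamma ((p:ℂ)+(q:ℂ))) ≠ 0 := by
    rw [show ((p:ℂ)+(q:ℂ)) = ((p+q:ℝ):ℂ) by push_cast; ring, Complex.Gamma_ofReal]
    exact_mod_cast (Real.Gamma_pos_of_pos (by linarith)).ne'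
  have hBval : Complex.betaIntegral p q =
      ((Real.Gamma p * Real.Gamma q / Real.Gamma (p+q) : ℝ) : ℂ) := by
    rw [show ((p:ℂ)+(q:ℂ)) = ((p+q:ℝ):ℂ) by push_cast; ring] at hgamma hΓpq
    rw [Complex.Gamma_ofReal, Complex.Gamma_ofReal, Complex.Gamma_ofReal] at hgamma
    rw [Complex.Gamma_ofReal] at hΓpq
    rw [Complex.ofReal_div, Complex.ofReal_mul, eq_div_iff hΓpq]
    linear_combination -hgamma
  -- convert LHS of hbeta to real integral
  have hL : (∫ s in (0:ℝ)..t, (s:ℂ) ^ ((p:ℂ)-1) * ((t:ℂ) - s) ^ ((q:ℂ)-1))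
      = ((∫ s in (0:ℝ)..t, s ^ (p-1) * (t - s) ^ (q-1) : ℝ) : ℂ) := by
    rw [← intervalIntegral.integral_ofReal]
    refine intervalIntegral.integral_congr fun x hx => ?_
    rw [Set.uIcc_of_le ht.le] at hx
    rw [show ((p:ℂ)-1) = ((p-1:ℝ):ℂ) by push_cast; ring,
      show ((q:ℂ)-1) = ((q-1:ℝ):ℂ) by push_cast; ring,
      show ((t:ℂ) - (x:ℂ)) = ((t-x:ℝ):ℂ) by push_cast; ring,
      ← Complex.ofReal_cpow hx.1, ← Complex.ofReal_cpow (by linarith [hx.2] : (0:ℝ) ≤ t - x),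
      Complex.ofReal_mul]
  have hR : ((t:ℂ)) ^ ((p:ℂ)+(q:ℂ)-1) = ((t ^ (p+q-1) : ℝ) : ℂ) := by
    rw [show ((p:ℂ)+(q:ℂ)-1) = ((p+q-1:ℝ):ℂ) by push_cast; ring, ← Complex.ofReal_cpow ht.le]
  rw [hL, hBval, hR] at hbeta
  exact_mod_cast hbeta


lemma prab_term_eq (α β γ δ : ℝ) {x : ℝ} (hx : 0 < x) (j : ℕ) :
    (ascPochhammer ℝ j).eval γ * δ ^ j / (Real.Gamma (α*j+β) * (j.factorial : ℝ)) * x ^ (α*j+β-1)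
      = x ^ (β-1) * ((ascPochhammer ℝ j).eval γ * (δ * x ^ α) ^ j /
          (Real.Gamma (α*j+β) * (j.factorial : ℝ))) := by
  have h1 : (δ * x ^ α) ^ j = δ ^ j * x ^ (α * j) := by
    rw [mul_pow, ← Real.rpow_natCast (x ^ α) j, ← Real.rpow_mul hx.le]
  have h2 : x ^ (α*(j:ℝ)+β-1) = x ^ (α*(j:ℝ)) * x ^ (β-1) := by
    rw [← Real.rpow_add hx]; ring_nf
  rw [h1, h2]
  ring

lemma prab_expand {α β : ℝ} (hβ : 0 < β) (γ δ : ℝ) {x : ℝ} (hx : 0 < x) :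
    x ^ (β - 1) * prabE α β γ (δ * x ^ α)
      = ∑' j : ℕ, (ascPochhammer ℝ j).eval γ * δ ^ j /
          (Real.Gamma (α*j+β) * (j.factorial : ℝ)) * x ^ (α*j+β-1) := by
  rw [prabE, ← tsum_mul_left]
  exact tsum_congr fun j => (prab_term_eq α β γ δ hx j).symm

lemma prab_factor_summable_norm {α β : ℝ} (hα : 0 < α) (hβ : 0 < β) (γ δ : ℝ) {x : ℝ}
    (hx : 0 < x) :
    Summable (fun j : ℕ => ‖(ascPochhammer ℝ j).eval γ * δ ^ j /
      (Real.Gamma (α*j+β) * (j.factorial : ℝ)) * x ^ (α*j+β-1)‖) := by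
  have h := ((summable_prab_norm hα hβ γ (δ * x^α)).mul_left (x^(β-1)))
  refine h.congr fun j => ?_
  rw [prab_term_eq α β γ δ hx j, norm_mul, Real.norm_eq_abs (x^(β-1)),
    abs_of_pos (Real.rpow_pos_of_pos hx _)]

lemma tsum_prod_antidiag {h : ℕ × ℕ → ℝ} (hs : Summable h) :
    ∑' jk : ℕ × ℕ, h jk = ∑' n : ℕ, ∑ kl ∈ antidiagonal n, h kl := by
  rw [← Finset.HasAntidiagonal.sigmaAntidiagonalEquivProd.tsum_eq h]
  conv_rhs => congr; ext n; rw [← Finset.sum_finset_coe, ← tsum_fintype (L := .unconditional _)]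
  exact Summable.tsum_sigma' (fun n => (hasSum_fintype _).summable)
    (Finset.HasAntidiagonal.sigmaAntidiagonalEquivProd.summable_iff.mpr hs)
set_option maxHeartbeats 1000000 in
lemma summable_master {α μ ν : ℝ} (γ σ δ t : ℝ) (hα : 0 < α) (hμ : 0 < μ) (hν : 0 < ν)
    (ht : 0 < t) :
    Summable (fun jk : ℕ × ℕ =>
      (|(ascPochhammer ℝ jk.1).eval γ| * |δ| ^ jk.1 / jk.1.factorial) *
      (|(ascPochhammer ℝ jk.2).eval σ| * |δ| ^ jk.2 / jk.2.factorial) *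
      (t ^ (α * jk.2 + ν + (α * jk.1 + μ) - 1) / Real.Gamma (α * jk.2 + ν + (α * jk.1 + μ)))) := by
  have htα : (0:ℝ) < t ^ α := Real.rpow_pos_of_pos ht α
  set a : ℝ := (|γ|+1) * |δ| * t ^ α with ha
  set b : ℝ := (|σ|+1) * |δ| * t ^ α with hb
  have ha0 : 0 ≤ a := by positivity
  have hb0 : 0 ≤ b := by positivity
  set M : ℝ := max a b + 1 with hM
  have hM0 : 0 < M := by positivity
  have haM : a ≤ M := by by_cases h : a ≤ b <;> simp [hM, max_def, h] <;> linarith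
  have hbM : b ≤ M := by by_cases h : a ≤ b <;> simp [hM, max_def, h] <;> linarith
  set K : ℝ := max 1 ((2 * M) ^ (α⁻¹)) with hKdef
  have hK1 : 1 ≤ K := le_max_left _ _
  have hK0 : (0:ℝ) < K := lt_of_lt_of_le one_pos hK1
  have hKα : 2 * M ≤ K ^ α := by
    calc 2*M = ((2*M) ^ (α⁻¹)) ^ α := (Real.rpow_inv_rpow (by positivity) hα.ne').symm
    _ ≤ K ^ α := Real.rpow_le_rpow (by positivity) (le_max_right _ _) hα.le
  have hKαpos : 0 < K ^ α := Real.rpow_pos_of_pos hK0 α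
  set C : ℝ := Real.exp K * K^(2:ℕ) * t ^ (μ+ν-1) / K ^ (μ+ν) with hC
  have hsum : Summable (fun jk : ℕ × ℕ => C * ((1/2:ℝ)^jk.1 * (1/2:ℝ)^jk.2)) := by
    refine Summable.mul_left C ?_
    exact Summable.mul_of_nonneg (summable_geometric_of_lt_one (by norm_num) (by norm_num))
      (summable_geometric_of_lt_one (by norm_num) (by norm_num))
      (fun n => by positivity) (fun n => by positivity)
  refine Summable.of_norm_bounded_eventually hsum ?_
  rw [Filter.eventually_cofinite]
  set N : ℕ := ⌈2/α⌉₊ + 1 with hN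
  have hsub : {jk : ℕ × ℕ | ¬ ‖(|(ascPochhammer ℝ jk.1).eval γ| * |δ| ^ jk.1 / jk.1.factorial) *
      (|(ascPochhammer ℝ jk.2).eval σ| * |δ| ^ jk.2 / jk.2.factorial) *
      (t ^ (α * jk.2 + ν + (α * jk.1 + μ) - 1) / Real.Gamma (α * jk.2 + ν + (α * jk.1 + μ)))‖ ≤
        C * ((1/2:ℝ)^jk.1 * (1/2:ℝ)^jk.2)} ⊆
      ((Finset.range N ×ˢ Finset.range N : Finset (ℕ × ℕ)) : Set (ℕ × ℕ)) := by
    intro jk hjk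
    simp only [Set.mem_setOf_eq] at hjk
    by_contra hmem
    apply hjk
    -- from ¬ mem, jk.1 ≥ N or jk.2 ≥ N, hence the argument is ≥ 2
    have harg : 2 ≤ α * jk.2 + ν + (α * jk.1 + μ) := by
      simp only [Finset.coe_product, Set.mem_prod, Finset.mem_coe, Finset.mem_range, not_and_or,
        not_lt] at hmem
      have hceil : 2/α ≤ (⌈2/α⌉₊ : ℝ) := Nat.le_ceil _
      have h2 : ∀ m : ℕ, N ≤ m → 2 ≤ α * m := by
        intro m hm
        have : (N:ℝ) ≤ m := Nat.cast_le.mpr hm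
        have hNα : 2/α ≤ (m:ℝ) := by
          have : ((⌈2/α⌉₊:ℝ) + 1) ≤ m := by rw [hN] at this; push_cast at this ⊢; linarith
          linarith
        have := (div_le_iff₀ hα).mp hNα
        linarith
      rcases hmem with hm | hm
      · have := h2 _ hm
        nlinarith [mul_nonneg hα.le (Nat.cast_nonneg (α := ℝ) jk.2)]
      · have := h2 _ hm
        nlinarith [mul_nonneg hα.le (Nat.cast_nonneg (α := ℝ) jk.1)]
    -- now prove the bound
    obtain ⟨j, k⟩ := jk
    simp only at harg ⊢
    set E : ℝ := α * k + ν + (α * j + μ) with hE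
    have hEpos : 0 < E := by positivity
    have hΓ : 0 < Real.Gamma E := Real.Gamma_pos_of_pos hEpos
    have hfj : (0:ℝ) < j.factorial := by exact_mod_cast j.factorial_pos
    have hfk : (0:ℝ) < k.factorial := by exact_mod_cast k.factorial_pos
    rw [Real.norm_eq_abs, abs_of_nonneg (by positivity)]
    have hgam : 1 / Real.Gamma E ≤ Real.exp K * K^(2:ℕ) / K ^ E := aux_inv_gamma_le hK1 harg
    have htE : t ^ (E - 1) = (t^α)^j * (t^α)^k * t ^ (μ+ν-1) := by
      rw [← Real.rpow_natCast (t^α) j, ← Real.rpow_natCast (t^α) k, ← Real.rpow_mul ht.le,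
        ← Real.rpow_mul ht.le, ← Real.rpow_add ht, ← Real.rpow_add ht]
      congr 1
      rw [hE]; push_cast; ring
    have hKE : K ^ E = (K^α)^j * (K^α)^k * K ^ (μ+ν) := by
      rw [← Real.rpow_natCast (K^α) j, ← Real.rpow_natCast (K^α) k, ← Real.rpow_mul hK0.le,
        ← Real.rpow_mul hK0.le, ← Real.rpow_add hK0, ← Real.rpow_add hK0]
      congr 1
      rw [hE]; push_cast; ring
    have hAj : |(ascPochhammer ℝ j).eval γ| * |δ| ^ j / j.factorial ≤ ((|γ|+1) * |δ|)^j := by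
      rw [div_le_iff₀ hfj, mul_pow]
      calc |(ascPochhammer ℝ j).eval γ| * |δ| ^ j
          ≤ ((|γ|+1)^j * j.factorial) * |δ| ^ j :=
            mul_le_mul_of_nonneg_right (abs_ascPochhammer_le γ j) (by positivity)
        _ = (|γ|+1)^j * |δ|^j * j.factorial := by ring
    have hBk : |(ascPochhammer ℝ k).eval σ| * |δ| ^ k / k.factorial ≤ ((|σ|+1) * |δ|)^k := by
      rw [div_le_iff₀ hfk, mul_pow]
      calc |(ascPochhammer ℝ k).eval σ| * |δ| ^ k
          ≤ ((|σ|+1)^k * k.factorial) * |δ| ^ k :=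
            mul_le_mul_of_nonneg_right (abs_ascPochhammer_le σ k) (by positivity)
        _ = (|σ|+1)^k * |δ|^k * k.factorial := by ring
    have hhalf_a : a / K^α ≤ 1/2 := by
      rw [div_le_div_iff₀ hKαpos (by norm_num)]; linarith
    have hhalf_b : b / K^α ≤ 1/2 := by
      rw [div_le_div_iff₀ hKαpos (by norm_num)]; linarith
    calc (|(ascPochhammer ℝ j).eval γ| * |δ| ^ j / j.factorial) *
        (|(ascPochhammer ℝ k).eval σ| * |δ| ^ k / k.factorial) * (t ^ (E-1) / Real.Gamma E)
        ≤ ((|γ|+1) * |δ|)^j * ((|σ|+1) * |δ|)^k * (t ^ (E-1) * (Real.exp K * K^(2:ℕ) / K ^ E)) := by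
          have h1 : t ^ (E-1) / Real.Gamma E ≤ t ^ (E-1) * (Real.exp K * K^(2:ℕ) / K ^ E) := by
            rw [div_eq_mul_one_div (t ^ (E-1))]
            exact mul_le_mul_of_nonneg_left hgam (by positivity)
          refine mul_le_mul (mul_le_mul hAj hBk (by positivity) (by positivity)) h1
            (by positivity) (by positivity)
      _ = C * ((a / K^α)^j * (b / K^α)^k) := by
          have e1 : a ^ j = ((|γ|+1) * |δ|)^j * (t^α)^j := by rw [ha, mul_pow]
          have e2 : b ^ k = ((|σ|+1) * |δ|)^k * (t^α)^k := by rw [hb, mul_pow]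
          rw [htE, hKE, hC, div_pow, div_pow, e1, e2]
          field_simp
      _ ≤ C * ((1/2:ℝ)^j * (1/2:ℝ)^k) := by
          have hCpos : 0 ≤ C := by positivity
          refine mul_le_mul_of_nonneg_left ?_ hCpos
          exact mul_le_mul (pow_le_pow_left₀ (by positivity) hhalf_a j)
            (pow_le_pow_left₀ (by positivity) hhalf_b k) (by positivity) (by positivity)
  exact ((Finset.range N ×ˢ Finset.range N : Finset (ℕ × ℕ)).finite_toSet.subset hsub)


set_option maxHeartbeats 1600000 in
/-- Convolution (semigroup) identity for Prabhakar kernels: for `α, μ, ν > 0` and `t > 0`,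
`∫₀ᵗ (t−s)^{μ−1} E_{α,μ}^{γ}(δ(t−s)^α) · s^{ν−1} E_{α,ν}^{σ}(δ s^α) ds
  = t^{μ+ν−1} E_{α,μ+ν}^{γ+σ}(δ t^α)`. -/
theorem prabhakar_kernel_convolution (α μ ν γ σ δ : ℝ)
    (hα : 0 < α) (hμ : 0 < μ) (hν : 0 < ν) (t : ℝ) (ht : 0 < t) :
    (∫ s in (0:ℝ)..t, (t - s) ^ (μ - 1) * prabE α μ γ (δ * (t - s) ^ α) *
        (s ^ (ν - 1) * prabE α ν σ (δ * s ^ α)))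
      = t ^ (μ + ν - 1) * prabE α (μ + ν) (γ + σ) (δ * t ^ α) := by
  have hμν : 0 < μ + ν := by linarith
  set c : ℕ → ℝ := fun j => (ascPochhammer ℝ j).eval γ * δ ^ j /
    (Real.Gamma (α*j+μ) * (j.factorial : ℝ)) with hc
  set d : ℕ → ℝ := fun k => (ascPochhammer ℝ k).eval σ * δ ^ k /
    (Real.Gamma (α*k+ν) * (k.factorial : ℝ)) with hd
  set F : ℕ × ℕ → ℝ → ℝ := fun jk s =>
      (c jk.1 * (t-s) ^ (α*jk.1+μ-1)) * (d jk.2 * s ^ (α*jk.2+ν-1)) with hF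
  -- integrability
  have hInt : ∀ jk : ℕ × ℕ, MeasureTheory.IntegrableOn (F jk) (Set.Ioo 0 t) := by
    rintro ⟨j, k⟩
    have h0 : IntervalIntegrable (fun s : ℝ => s ^ (α*k+ν-1) * (t-s) ^ (α*j+μ-1)) volume 0 t :=
      intervalIntegrable_beta (by positivity) (by positivity) ht
    have h1 : MeasureTheory.IntegrableOn (fun s : ℝ => s ^ (α*k+ν-1)*(t-s)^(α*j+μ-1))
        (Set.Ioo 0 t) := (intervalIntegrable_iff_integrableOn_Ioo_of_le ht.le).mp h0
    refine (h1.const_mul (c j * d k)).congr ?_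
    exact Filter.Eventually.of_forall fun s => by simp only [hF]; ring
  -- integral values
  have hIF : ∀ jk : ℕ × ℕ, ∫ s in Set.Ioo (0:ℝ) t, F jk s
      = c jk.1 * d jk.2 * (t ^ (α*jk.2+ν + (α*jk.1+μ) - 1) *
          (Real.Gamma (α*jk.2+ν) * Real.Gamma (α*jk.1+μ) /
            Real.Gamma (α*jk.2+ν + (α*jk.1+μ)))) := by
    rintro ⟨j, k⟩
    rw [← MeasureTheory.integral_Ioc_eq_integral_Ioo, ← intervalIntegral.integral_of_le ht.le,
      show F (j,k) = fun s => (c j * d k) * (s ^ (α*k+ν-1) * (t-s) ^ (α*j+μ-1)) from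
        funext fun s => by simp only [hF]; ring,
      intervalIntegral.integral_const_mul,
      integral_beta_real (by positivity) (by positivity) ht]
  -- norm integral values
  have hINorm : ∀ jk : ℕ × ℕ, (∫ s in Set.Ioo (0:ℝ) t, ‖F jk s‖)
      = (|(ascPochhammer ℝ jk.1).eval γ| * |δ| ^ jk.1 / jk.1.factorial) *
        (|(ascPochhammer ℝ jk.2).eval σ| * |δ| ^ jk.2 / jk.2.factorial) *
        (t ^ (α*jk.2+ν + (α*jk.1+μ) - 1) / Real.Gamma (α*jk.2+ν + (α*jk.1+μ))) := by
    rintro ⟨j, k⟩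
    have hcongr : Set.EqOn (fun s => ‖F (j,k) s‖)
        (fun s => (|c j| * |d k|) * (s ^ (α*k+ν-1) * (t-s) ^ (α*j+μ-1))) (Set.Ioo 0 t) := by
      intro s hs
      have hs0 : (0:ℝ) < s := hs.1
      have hts : (0:ℝ) < t - s := by linarith [hs.2]
      simp only [hF, Real.norm_eq_abs, abs_mul, abs_of_pos (Real.rpow_pos_of_pos hts _),
        abs_of_pos (Real.rpow_pos_of_pos hs0 _)]
      ring
    rw [MeasureTheory.setIntegral_congr_fun measurableSet_Ioo hcongr,
      MeasureTheory.integral_const_mul, ← MeasureTheory.integral_Ioc_eq_integral_Ioo,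
      ← intervalIntegral.integral_of_le ht.le,
      integral_beta_real (by positivity) (by positivity) ht]
    have h1 : 0 < Real.Gamma (α*j+μ) := Real.Gamma_pos_of_pos (by positivity)
    have h2 : 0 < Real.Gamma (α*k+ν) := Real.Gamma_pos_of_pos (by positivity)
    have hfj : (0:ℝ) < j.factorial := by exact_mod_cast j.factorial_pos
    have hfk : (0:ℝ) < k.factorial := by exact_mod_cast k.factorial_pos
    simp only [hc, hd, abs_div, abs_mul, abs_pow, abs_of_pos h1, abs_of_pos h2,
      Nat.abs_cast]
    field_simp
  have hSumNorm : Summable (fun jk : ℕ × ℕ => ∫ s in Set.Ioo (0:ℝ) t, ‖F jk s‖) :=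
    (summable_master γ σ δ t hα hμ hν ht).congr fun jk => (hINorm jk).symm
  have hH : Summable (fun jk : ℕ × ℕ => ∫ s in Set.Ioo (0:ℝ) t, F jk s) := by
    refine Summable.of_norm_bounded hSumNorm fun jk => ?_
    exact MeasureTheory.norm_integral_le_integral_norm _
  -- pointwise expansion of the integrand
  have hcong : Set.EqOn
      (fun s => (t - s) ^ (μ - 1) * prabE α μ γ (δ * (t - s) ^ α) *
        (s ^ (ν - 1) * prabE α ν σ (δ * s ^ α)))
      (fun s => ∑' jk : ℕ × ℕ, F jk s) (Set.Ioo 0 t) := by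
    intro s hs
    have hs0 : (0:ℝ) < s := hs.1
    have hts : (0:ℝ) < t - s := by linarith [hs.2]
    simp only
    rw [prab_expand hμ γ δ hts, prab_expand hν σ δ hs0,
      tsum_mul_tsum_of_summable_norm (prab_factor_summable_norm hα hμ γ δ hts)
        (prab_factor_summable_norm hα hν σ δ hs0)]
  calc (∫ s in (0:ℝ)..t, (t - s) ^ (μ - 1) * prabE α μ γ (δ * (t - s) ^ α) *
        (s ^ (ν - 1) * prabE α ν σ (δ * s ^ α)))
      = ∫ s in Set.Ioo (0:ℝ) t, (t - s) ^ (μ - 1) * prabE α μ γ (δ * (t - s) ^ α) *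
          (s ^ (ν - 1) * prabE α ν σ (δ * s ^ α)) := by
        rw [intervalIntegral.integral_of_le ht.le, MeasureTheory.integral_Ioc_eq_integral_Ioo]
    _ = ∫ s in Set.Ioo (0:ℝ) t, ∑' jk : ℕ × ℕ, F jk s := by
        exact MeasureTheory.setIntegral_congr_fun measurableSet_Ioo hcong
    _ = ∑' jk : ℕ × ℕ, ∫ s in Set.Ioo (0:ℝ) t, F jk s :=
        (MeasureTheory.integral_tsum_of_summable_integral_norm hInt hSumNorm).symm
    _ = ∑' n : ℕ, ∑ kl ∈ antidiagonal n, ∫ s in Set.Ioo (0:ℝ) t, F kl s :=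
        tsum_prod_antidiag hH
    _ = ∑' n : ℕ, (ascPochhammer ℝ n).eval (γ+σ) * δ ^ n /
          (Real.Gamma (α*n+(μ+ν)) * (n.factorial : ℝ)) * t ^ (α*n+(μ+ν)-1) := by
        refine tsum_congr fun n => ?_
        rw [Finset.sum_congr rfl fun kl hkl => hIF kl]
        rw [ascPochhammer_add_eval γ σ n, Finset.sum_mul, Finset.sum_div, Finset.sum_mul]
        refine Finset.sum_congr rfl fun kl hkl => ?_
        obtain ⟨j, k⟩ := kl
        have hsum : j + k = n := Finset.HasAntidiagonal.mem_antidiagonal.mp hkl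
        have hE : α*(k:ℝ)+ν + (α*(j:ℝ)+μ) = α*(n:ℝ)+(μ+ν) := by
          have : (j:ℝ) + (k:ℝ) = n := by exact_mod_cast hsum
          ring_nf
          nlinarith [this]
        simp only
        rw [hE]
        have hG1 : 0 < Real.Gamma (α*j+μ) := Real.Gamma_pos_of_pos (by positivity)
        have hG2 : 0 < Real.Gamma (α*k+ν) := Real.Gamma_pos_of_pos (by positivity)
        have hG3 : 0 < Real.Gamma (α*n+(μ+ν)) := Real.Gamma_pos_of_pos (by positivity)
        have hfj : (0:ℝ) < j.factorial := by exact_mod_cast j.factorial_pos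
        have hfk : (0:ℝ) < k.factorial := by exact_mod_cast k.factorial_pos
        have hfn : (0:ℝ) < n.factorial := by exact_mod_cast n.factorial_pos
        have hfac : (n.factorial : ℝ) = (n.choose j : ℝ) * j.factorial * k.factorial := by
          rw [← Nat.choose_mul_factorial_mul_factorial (by omega : j ≤ n)]
          push_cast [show n - j = k from by omega]
          ring
        have hδ : δ ^ j * δ ^ k = δ ^ n := by rw [← pow_add, hsum]
        have hch : ((n.choose j : ℕ) : ℝ) ≠ 0 := by
          exact_mod_cast (Nat.choose_pos (by omega : j ≤ n)).ne'
        simp only [hc, hd]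
        rw [hfac, ← hδ]
        field_simp [hG1.ne', hG2.ne', hG3.ne', hfj.ne', hfk.ne', hch]
    _ = t ^ (μ + ν - 1) * prabE α (μ + ν) (γ + σ) (δ * t ^ α) :=
        (prab_expand hμν (γ+σ) δ ht).symm
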